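/- arXiv:1411.2417 — 5 statements merged into one kernel-verified Lean document; each statement's English description precedes it below -/
import Mathlib

section
/- Let T be a zero-structured matrix over F_q of size r×c with block structure indexed by subsets S of {1,…,t}: block b_{(S₁,S₂)} has size r_{S₁}×c_{S₂} and is constrained to be zero whenever S₁ ⊄ S₂, with other entries free. If q is sufficiently large, there exists an assignment of the free entries making T full column rank if and only if for every superset-saturated family Λ ⊆ 2^{{1,…,t}}, one has c ≤ Σ_{S∈Λ} c_S + Σ_{S∈Λᶜ} r_S. -/
/-- A family `Λ` of subsets of `{1,…,t}` is superset-saturated if it is closed under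
taking supersets. -/
def SupersetSaturated {t : ℕ} (Λ : Finset (Finset (Fin t))) : Prop :=
  ∀ S ∈ Λ, ∀ T : Finset (Fin t), S ⊆ T → T ∈ Λ

open Finset

lemma card_filter_sigma_fst {t : ℕ} (β : Finset (Fin t) → ℕ)
    (P : Finset (Fin t) → Prop) [DecidablePred P] :
    (Finset.univ.filter fun j : (S : Finset (Fin t)) × Fin (β S) => P j.1).card
      = ∑ S ∈ Finset.univ.filter P, β S := by
  rw [← Finset.univ_sigma_univ]
  have h : ((Finset.univ.sigma fun _ => Finset.univ).filter
      fun j : (S : Finset (Fin t)) × Fin (β S) => P j.1)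
      = (Finset.univ.filter P).sigma fun _ => Finset.univ := by
    ext j
    simp [Finset.mem_sigma, Finset.mem_filter]
  rw [h, Finset.card_sigma]
  simp

lemma card_filter_mem {t : ℕ} (β : Finset (Fin t) → ℕ) (D : Finset (Finset (Fin t))) :
    (Finset.univ.filter fun j : (S : Finset (Fin t)) × Fin (β S) => j.1 ∈ D).card
      = ∑ S ∈ D, β S := by
  rw [card_filter_sigma_fst β (fun S => S ∈ D)]
  congr 1
  ext S; simp

lemma card_sub_compl {t : ℕ} (β : Finset (Fin t) → ℕ) (Λ : Finset (Finset (Fin t))) :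
    Fintype.card {j : (S : Finset (Fin t)) × Fin (β S) // j.1 ∉ Λ} = ∑ S ∈ Λᶜ, β S := by
  rw [Fintype.card_subtype, card_filter_sigma_fst β (fun S => S ∉ Λ)]
  congr 1
  ext S; simp

lemma stmt3_forward {t : ℕ} (rS cS : Finset (Fin t) → ℕ) (F : Type) [Field F]
    (M : Matrix ((S : Finset (Fin t)) × Fin (rS S)) ((S : Finset (Fin t)) × Fin (cS S)) F)
    (hzero : ∀ i j, ¬ i.1 ⊆ j.1 → M i j = 0)
    (hrank : M.rank = ∑ S : Finset (Fin t), cS S)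
    (Λ : Finset (Finset (Fin t))) (hΛ : SupersetSaturated Λ) :
    (∑ S : Finset (Fin t), cS S) ≤ ∑ S ∈ Λ, cS S + ∑ S ∈ Λᶜ, rS S := by
  have hcardκ : Fintype.card ((S : Finset (Fin t)) × Fin (cS S))
      = ∑ S : Finset (Fin t), cS S := by
    simp [Fintype.card_sigma]
  have hker : LinearMap.ker M.mulVecLin = ⊥ := by
    have h1 : M.rank + Module.finrank F (LinearMap.ker M.mulVecLin)
        = Module.finrank F (((S : Finset (Fin t)) × Fin (cS S)) → F) :=
      M.mulVecLin.finrank_range_add_finrank_ker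
    rw [hrank, Module.finrank_fintype_fun_eq_card, hcardκ] at h1
    have h2 : Module.finrank F (LinearMap.ker M.mulVecLin) = 0 := by omega
    exact Submodule.finrank_eq_zero.mp h2
  have hinj : ∀ v : ((S : Finset (Fin t)) × Fin (cS S)) → F, M.mulVec v = 0 → v = 0 := by
    intro v hv
    exact LinearMap.ker_eq_bot.mp hker (by simpa [Matrix.mulVecLin_apply] using hv)
  let e : ({j : (S : Finset (Fin t)) × Fin (cS S) // j.1 ∉ Λ} → F) →ₗ[F]
      (((S : Finset (Fin t)) × Fin (cS S)) → F) :=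
    Function.ExtendByZero.linearMap F Subtype.val
  let π : (((S : Finset (Fin t)) × Fin (rS S)) → F) →ₗ[F]
      ({i : (S : Finset (Fin t)) × Fin (rS S) // i.1 ∉ Λ} → F) :=
    LinearMap.funLeft F F Subtype.val
  let φ := π ∘ₗ M.mulVecLin ∘ₗ e
  have hφ : ∀ v, φ v = 0 → v = 0 := by
    intro v hv
    have hext : M.mulVec (e v) = 0 := by
      funext i
      by_cases hi : i.1 ∉ Λ
      · exact congrFun hv ⟨i, hi⟩
      · push_neg at hi
        show (Finset.univ.sum fun j => M i j * e v j) = 0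
        refine Finset.sum_eq_zero fun j _ => ?_
        by_cases hj : j.1 ∉ Λ
        · have hns : ¬ i.1 ⊆ j.1 := fun hsub => hj (hΛ i.1 hi j.1 hsub)
          rw [hzero i j hns, zero_mul]
        · have hz : e v j = 0 := by
            have hne : ¬ ∃ a : {j : (S : Finset (Fin t)) × Fin (cS S) // j.1 ∉ Λ},
                a.val = j := by
              rintro ⟨a, rfl⟩; exact hj a.2
            exact
              Function.extend_apply' v (0 : ((S : Finset (Fin t)) × Fin (cS S)) → F) j hne
          rw [hz, mul_zero]
    have hev := hinj _ hext
    funext j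
    have h3 : e v j.val = v j := by
      exact
        Function.Injective.extend_apply Subtype.val_injective v
          (0 : ((S : Finset (Fin t)) × Fin (cS S)) → F) j
    rw [← h3, hev]; rfl
  have hφinj : Function.Injective φ :=
    LinearMap.ker_eq_bot.mp (LinearMap.ker_eq_bot'.mpr hφ)
  have hle := LinearMap.finrank_le_finrank_of_injective hφinj
  rw [Module.finrank_fintype_fun_eq_card, Module.finrank_fintype_fun_eq_card,
    card_sub_compl cS Λ, card_sub_compl rS Λ] at hle
  calc ∑ S : Finset (Fin t), cS S = ∑ S ∈ Λ, cS S + ∑ S ∈ Λᶜ, cS S :=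
        (Finset.sum_add_sum_compl Λ cS).symm
    _ ≤ ∑ S ∈ Λ, cS S + ∑ S ∈ Λᶜ, rS S := by omega

lemma stmt3_backward {t : ℕ} (rS cS : Finset (Fin t) → ℕ) (F : Type) [Field F]
    (hcond : ∀ Λ : Finset (Finset (Fin t)), SupersetSaturated Λ →
      (∑ S : Finset (Fin t), cS S) ≤ ∑ S ∈ Λ, cS S + ∑ S ∈ Λᶜ, rS S) :
    ∃ M : Matrix ((S : Finset (Fin t)) × Fin (rS S)) ((S : Finset (Fin t)) × Fin (cS S)) F,
      (∀ i j, ¬ i.1 ⊆ j.1 → M i j = 0) ∧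
      M.rank = ∑ S : Finset (Fin t), cS S := by
  let rel : ((S : Finset (Fin t)) × Fin (cS S)) →
      Finset ((S : Finset (Fin t)) × Fin (rS S)) :=
    fun j => Finset.univ.filter fun i => i.1 ⊆ j.1
  have hall : ∀ A : Finset ((S : Finset (Fin t)) × Fin (cS S)),
      A.card ≤ (A.biUnion rel).card := by
    intro A
    set D : Finset (Finset (Fin t)) :=
      Finset.univ.filter (fun S => ∃ T ∈ A.image Sigma.fst, S ⊆ T) with hD
    have hmemD : ∀ S : Finset (Fin t), S ∈ D ↔ ∃ T ∈ A.image Sigma.fst, S ⊆ T := by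
      intro S; rw [hD]; simp
    have hΛ : SupersetSaturated Dᶜ := by
      intro S hS T hST
      rw [Finset.mem_compl] at hS ⊢
      rw [hmemD] at hS ⊢
      rintro ⟨U, hU, hTU⟩
      exact hS ⟨U, hU, hST.trans hTU⟩
    have hineq := hcond Dᶜ hΛ
    rw [compl_compl] at hineq
    have hsplit : ∑ S : Finset (Fin t), cS S = ∑ S ∈ Dᶜ, cS S + ∑ S ∈ D, cS S := by
      have h := Finset.sum_add_sum_compl Dᶜ cS
      rw [compl_compl] at h
      omega
    have hA : A.card ≤ ∑ S ∈ D, cS S := by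
      calc A.card ≤ (Finset.univ.filter fun j : (S : Finset (Fin t)) × Fin (cS S) =>
            j.1 ∈ D).card := by
            apply Finset.card_le_card
            intro j hj
            simp only [Finset.mem_filter, Finset.mem_univ, true_and]
            exact (hmemD j.1).mpr ⟨j.1, Finset.mem_image_of_mem _ hj, subset_rfl⟩
        _ = ∑ S ∈ D, cS S := card_filter_mem cS D
    have hN : ∑ S ∈ D, rS S ≤ (A.biUnion rel).card := by
      rw [← card_filter_mem rS D]
      apply Finset.card_le_card
      intro i hi
      simp only [Finset.mem_filter, Finset.mem_univ, true_and] at hi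
      rw [hmemD] at hi
      obtain ⟨T, hT, hsub⟩ := hi
      rw [Finset.mem_image] at hT
      obtain ⟨j, hjA, rfl⟩ := hT
      rw [Finset.mem_biUnion]
      exact ⟨j, hjA, by simp [rel, hsub]⟩
    omega
  obtain ⟨f, hfinj, hf⟩ := (Finset.all_card_le_biUnion_card_iff_exists_injective rel).mp hall
  have hfsub : ∀ j : (S : Finset (Fin t)) × Fin (cS S), (f j).1 ⊆ j.1 := by
    intro j
    have h := hf j
    simpa [rel] using h
  classical
  refine ⟨Matrix.of fun i j => if f j = i then (1 : F) else 0, ?_, ?_⟩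
  · intro i j h
    simp only [Matrix.of_apply, ite_eq_right_iff]
    rintro rfl
    exact absurd (hfsub j) h
  · have key : ∀ v : ((S : Finset (Fin t)) × Fin (cS S)) → F,
        (Matrix.of fun i j => if f j = i then (1 : F) else 0).mulVec v = 0 → v = 0 := by
      intro v hv
      funext j0
      have h2 := congrFun hv (f j0)
      simpa [Matrix.mulVec, dotProduct, hfinj.eq_iff, ite_mul] using h2
    have hinjM : Function.Injective
        (Matrix.of fun i j => if f j = i then (1 : F) else 0).mulVecLin := by
      refine LinearMap.ker_eq_bot.mp (LinearMap.ker_eq_bot'.mpr fun v hv => ?_)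
      exact key v (by simpa [Matrix.mulVecLin_apply] using hv)
    have hrk : (Matrix.of fun i j => if f j = i then (1 : F) else 0).rank
        = Module.finrank F (LinearMap.range
          (Matrix.of fun i j => if f j = i then (1 : F) else 0).mulVecLin) := rfl
    rw [hrk, LinearMap.finrank_range_of_inj hinjM, Module.finrank_fintype_fun_eq_card]
    simp [Fintype.card_sigma]

/-- for a zero-structured matrix (block `(S₁,S₂)` of size `r_{S₁} × c_{S₂}`
forced to be zero when `S₁ ⊄ S₂`), for all sufficiently large finite fields there exists an
assignment of the free entries making it full column rank iff for every superset-saturated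
family `Λ`, `c ≤ Σ_{S∈Λ} c_S + Σ_{S∈Λᶜ} r_S`. -/
theorem stmt3 {t : ℕ} (rS cS : Finset (Fin t) → ℕ) :
    ∃ q0 : ℕ, ∀ (F : Type) [Field F] [Fintype F], q0 ≤ Fintype.card F →
      ((∃ M : Matrix ((S : Finset (Fin t)) × Fin (rS S)) ((S : Finset (Fin t)) × Fin (cS S)) F,
          (∀ i j, ¬ i.1 ⊆ j.1 → M i j = 0) ∧
          M.rank = ∑ S : Finset (Fin t), cS S)
        ↔ (∀ Λ : Finset (Finset (Fin t)), SupersetSaturated Λ →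
            (∑ S : Finset (Fin t), cS S) ≤ ∑ S ∈ Λ, cS S + ∑ S ∈ Λᶜ, rS S)) := by
  refine ⟨0, fun F _ _ _ => ⟨?_, ?_⟩⟩
  · rintro ⟨M, hzero, hrank⟩ Λ hΛ
    exact stmt3_forward rS cS F M hzero hrank Λ hΛ
  · intro hcond
    exact stmt3_backward rS cS F hcond
end

section
/- In the equivalent four-layer unicast network (source A; nodes n_S with c_S parallel unit-capacity edges from A; nodes n'_S with r_S parallel unit-capacity edges to sink B; infinite-capacity edges from n_S to n'_{S'} exactly when S' ⊆ S), the minimum cut separating A and B equals min over superset-saturated Λ ⊆ 2^{{1,…,t}} of Σ_{S∈Λ} c_S + Σ_{S∈Λᶜ} r_S. -/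
/-- Edges of the four-layer unicast network: `c_S` parallel source edges `A → n_S`,
one infinite-capacity middle edge `n_S → n'_{S'}` for every `S' ⊆ S` (the pair `(S,S')`),
and `r_S` parallel sink edges `n'_S → B`. -/
abbrev NetEdge (t : ℕ) (cS rS : Finset (Fin t) → ℕ) : Type :=
  ((S : Finset (Fin t)) × Fin (cS S)) ⊕
    ((Finset (Fin t) × Finset (Fin t)) ⊕ ((S : Finset (Fin t)) × Fin (rS S)))

/-- Edge capacities: unit on source/sink edges, infinite on middle edges. -/
def cap {t : ℕ} (cS rS : Finset (Fin t) → ℕ) : NetEdge t cS rS → ℕ∞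
  | .inl _ => 1
  | .inr (.inl _) => ⊤
  | .inr (.inr _) => 1

/-- `C` is a cut separating `A` and `B`: every path `A → n_S → n'_{S'} → B`
(with `S' ⊆ S`) uses an edge of `C`. -/
def IsCut {t : ℕ} (cS rS : Finset (Fin t) → ℕ) (C : Finset (NetEdge t cS rS)) : Prop :=
  ∀ (S S' : Finset (Fin t)), S' ⊆ S → ∀ (k : Fin (cS S)) (j : Fin (rS S')),
    Sum.inl ⟨S, k⟩ ∈ C ∨ Sum.inr (Sum.inl (S, S')) ∈ C ∨ Sum.inr (Sum.inr ⟨S', j⟩) ∈ C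

/-- Capacity of a cut. -/
def cutValue {t : ℕ} (cS rS : Finset (Fin t) → ℕ) (C : Finset (NetEdge t cS rS)) : ℕ∞ :=
  ∑ e ∈ C, cap cS rS e

lemma inrInr_injective {t : ℕ} (cS rS : Finset (Fin t) → ℕ) :
    Function.Injective
      (fun x : (S : Finset (Fin t)) × Fin (rS S) => (Sum.inr (Sum.inr x) : NetEdge t cS rS)) :=
  fun a b h => by simpa using h

/-- The canonical cut associated to a family `Λ`: all source edges into nodes of `Λ`
together with all sink edges out of nodes not in `Λ`. -/
def cutOf {t : ℕ} (cS rS : Finset (Fin t) → ℕ) (Λ : Finset (Finset (Fin t))) :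
    Finset (NetEdge t cS rS) :=
  ((Λ.sigma fun S => (Finset.univ : Finset (Fin (cS S)))).map
      ⟨Sum.inl, Sum.inl_injective⟩) ∪
  ((Λᶜ.sigma fun S => (Finset.univ : Finset (Fin (rS S)))).map
      ⟨fun x => Sum.inr (Sum.inr x), inrInr_injective cS rS⟩)

lemma mem_cutOf_inl {t : ℕ} (cS rS : Finset (Fin t) → ℕ) (Λ : Finset (Finset (Fin t)))
    (S : Finset (Fin t)) (k : Fin (cS S)) :
    (Sum.inl ⟨S, k⟩ : NetEdge t cS rS) ∈ cutOf cS rS Λ ↔ S ∈ Λ := by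
  simp [cutOf]

lemma mem_cutOf_inr {t : ℕ} (cS rS : Finset (Fin t) → ℕ) (Λ : Finset (Finset (Fin t)))
    (S : Finset (Fin t)) (j : Fin (rS S)) :
    (Sum.inr (Sum.inr ⟨S, j⟩) : NetEdge t cS rS) ∈ cutOf cS rS Λ ↔ S ∉ Λ := by
  simp [cutOf]

lemma cutValue_cutOf {t : ℕ} (cS rS : Finset (Fin t) → ℕ) (Λ : Finset (Finset (Fin t))) :
    cutValue cS rS (cutOf cS rS Λ) = ((∑ S ∈ Λ, cS S + ∑ S ∈ Λᶜ, rS S : ℕ) : ℕ∞) := by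
  have hdisj : Disjoint
      (((Λ.sigma fun S => (Finset.univ : Finset (Fin (cS S)))).map
        ⟨Sum.inl, Sum.inl_injective⟩ : Finset (NetEdge t cS rS)))
      ((Λᶜ.sigma fun S => (Finset.univ : Finset (Fin (rS S)))).map
        ⟨fun x => Sum.inr (Sum.inr x), inrInr_injective cS rS⟩) := by
    simp [Finset.disjoint_left]
  rw [cutValue, cutOf, Finset.sum_union hdisj, Finset.sum_map, Finset.sum_map]
  have h1 : ∀ x ∈ Λ.sigma fun S => (Finset.univ : Finset (Fin (cS S))),
      cap cS rS (Sum.inl x) = 1 := fun _ _ => rfl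
  have h2 : ∀ x ∈ Λᶜ.sigma fun S => (Finset.univ : Finset (Fin (rS S))),
      cap cS rS (Sum.inr (Sum.inr x)) = 1 := fun _ _ => rfl
  simp only [Function.Embedding.coeFn_mk]
  rw [Finset.sum_congr rfl h1, Finset.sum_congr rfl h2, Finset.sum_const, Finset.sum_const,
    Finset.card_sigma, Finset.card_sigma]
  simp [mul_one]

/-- the minimum cut separating `A` and `B` equals
`min` over superset-saturated `Λ` of `Σ_{S∈Λ} c_S + Σ_{S∈Λᶜ} r_S`. -/
theorem stmt4 {t : ℕ} (cS rS : Finset (Fin t) → ℕ) :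
    sInf {v : ℕ∞ | ∃ C : Finset (NetEdge t cS rS), IsCut cS rS C ∧ cutValue cS rS C = v}
      = sInf {v : ℕ∞ | ∃ Λ : Finset (Finset (Fin t)), SupersetSaturated Λ ∧
          v = ((∑ S ∈ Λ, cS S + ∑ S ∈ Λᶜ, rS S : ℕ) : ℕ∞)} := by
  classical
  apply le_antisymm
  · -- min cut ≤ each Λ-value
    apply le_sInf
    rintro v ⟨Λ, hΛ, rfl⟩
    apply sInf_le
    refine ⟨cutOf cS rS Λ, ?_, cutValue_cutOf cS rS Λ⟩
    intro S S' hsub k j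
    by_cases hS : S ∈ Λ
    · exact Or.inl ((mem_cutOf_inl cS rS Λ S k).mpr hS)
    · refine Or.inr (Or.inr ((mem_cutOf_inr cS rS Λ S' j).mpr ?_))
      intro hS'
      exact hS (hΛ S' hS' S hsub)
  · -- each cut value ≥ some Λ-value
    apply le_sInf
    rintro v ⟨C, hC, rfl⟩
    by_cases htop : cutValue cS rS C = ⊤
    · rw [htop]; exact le_top
    · -- no middle edge is in C
      have hmid : ∀ p : Finset (Fin t) × Finset (Fin t),
          (Sum.inr (Sum.inl p) : NetEdge t cS rS) ∉ C := by
        intro p hp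
        apply htop
        have := Finset.single_le_sum (f := cap cS rS) (fun e _ => zero_le) hp
        rw [show cap cS rS (Sum.inr (Sum.inl p)) = ⊤ from rfl] at this
        exact top_le_iff.mp this
      set Λ : Finset (Finset (Fin t)) :=
        Finset.univ.filter (fun S => ∃ S' ∈ S.powerset, ∃ j : Fin (rS S'),
          (Sum.inr (Sum.inr ⟨S', j⟩) : NetEdge t cS rS) ∉ C) with hΛdef
      have hmemΛ : ∀ S : Finset (Fin t), S ∈ Λ ↔ ∃ S', S' ⊆ S ∧ ∃ j : Fin (rS S'),
          (Sum.inr (Sum.inr ⟨S', j⟩) : NetEdge t cS rS) ∉ C := by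
        intro S
        simp [hΛdef, Finset.mem_powerset]
      have hsat : SupersetSaturated Λ := by
        intro S hS T hST
        rw [hmemΛ] at hS ⊢
        obtain ⟨S', hsub, j, hj⟩ := hS
        exact ⟨S', hsub.trans hST, j, hj⟩
      have hsubC : cutOf cS rS Λ ⊆ C := by
        intro e he
        match e with
        | Sum.inl ⟨S, k⟩ =>
          rw [mem_cutOf_inl, hmemΛ] at he
          obtain ⟨S', hsub, j, hj⟩ := he
          rcases hC S S' hsub k j with h | h | h
          · exact h
          · exact absurd h (hmid _)
          · exact absurd h hj
        | Sum.inr (Sum.inl p) =>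
          exfalso
          have := (Finset.mem_union.mp he)
          simp [cutOf] at he
        | Sum.inr (Sum.inr ⟨S, j⟩) =>
          rw [mem_cutOf_inr, hmemΛ] at he
          push_neg at he
          exact he S (subset_refl S) j
      calc sInf {v : ℕ∞ | ∃ Λ : Finset (Finset (Fin t)), SupersetSaturated Λ ∧
          v = ((∑ S ∈ Λ, cS S + ∑ S ∈ Λᶜ, rS S : ℕ) : ℕ∞)}
          ≤ ((∑ S ∈ Λ, cS S + ∑ S ∈ Λᶜ, rS S : ℕ) : ℕ∞) := sInf_le ⟨Λ, hsat, rfl⟩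
        _ = cutValue cS rS (cutOf cS rS Λ) := (cutValue_cutOf cS rS Λ).symm
        _ ≤ cutValue cS rS C :=
            Finset.sum_le_sum_of_subset_of_nonneg hsubC (fun _ _ _ => zero_le)
end

section
/- If a multiset Λ of subsets is a compression (a finite sequence of elementary compressions) of a multiset Γ, then for any finite-entropy random vector X, Σ_{Γ'∈Γ} H(X_{Γ'}) ≥ Σ_{Λ'∈Λ} H(X_{Λ'}). -/
/-- Shannon entropy (in nats) of a finite-valued random variable. -/
noncomputable def ent {Ω β : Type*} [Fintype Ω] [Fintype β] [DecidableEq β]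
    (p : Ω → ℝ) (f : Ω → β) : ℝ :=
  ∑ b : β, Real.negMulLog (∑ ω ∈ Finset.univ.filter fun ω => f ω = b, p ω)

/-- Joint entropy `H(X_A)` of the subvector of `X` indexed by `A`. -/
noncomputable def jent {N : ℕ} {Ω α : Type*} [Fintype Ω] [Fintype α] [DecidableEq α]
    (p : Ω → ℝ) (X : Fin N → Ω → α) (A : Finset (Fin N)) : ℝ :=
  ent p (fun ω i => if i ∈ A then some (X i ω) else (none : Option α))

/-- Elementary compression of a multiset of subsets: replace members `A, B`
by `A∩B, A∪B`. -/
def ElemComp {N : ℕ} (Γ Λ : Multiset (Finset (Fin N))) : Prop :=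
  ∃ (Γ₀ : Multiset (Finset (Fin N))) (A B : Finset (Fin N)),
    Γ = A ::ₘ B ::ₘ Γ₀ ∧ Λ = (A ∩ B) ::ₘ (A ∪ B) ::ₘ Γ₀

open Finset Real


lemma fiber_sum {Ω S : Type*} [Fintype Ω] [Fintype S] [DecidableEq S]
    (p : Ω → ℝ) (f : Ω → S) (P : S → Prop) [DecidablePred P] :
    ∑ s ∈ Finset.univ.filter P, (∑ ω ∈ Finset.univ.filter fun ω => f ω = s, p ω)
      = ∑ ω ∈ Finset.univ.filter (fun ω => P (f ω)), p ω := by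
  classical
  rw [← Finset.sum_fiberwise_of_maps_to (g := f) (t := Finset.univ.filter P)
        (s := Finset.univ.filter fun ω => P (f ω)) (by intro x hx; simp at hx ⊢; exact hx) p]
  refine Finset.sum_congr rfl fun s hs => ?_
  refine Finset.sum_congr ?_ fun _ _ => rfl
  ext ω
  simp only [Finset.mem_filter, Finset.mem_univ, true_and] at hs ⊢
  constructor
  · intro h; exact ⟨h ▸ hs, h⟩
  · exact fun h => h.2

lemma sum_negMulLog_fiber {S U : Type*} [Fintype S] [Fintype U] [DecidableEq U]
    (q : S → ℝ) (u : S → U) (Q : U → ℝ)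
    (hQ : ∀ a, Q a = ∑ s ∈ Finset.univ.filter fun s => u s = a, q s) :
    ∑ a : U, Real.negMulLog (Q a)
      = ∑ s : S, q s * (-(Real.log (Q (u s)))) := by
  classical
  rw [← Finset.sum_fiberwise (Finset.univ) u (fun s => q s * (-(Real.log (Q (u s)))))]
  refine Finset.sum_congr rfl fun a _ => ?_
  have h1 : ∀ s ∈ Finset.univ.filter fun s => u s = a,
      q s * (-(Real.log (Q (u s)))) = q s * (-(Real.log (Q a))) := by
    intro s hs
    simp only [Finset.mem_filter, Finset.mem_univ, true_and] at hs
    rw [hs]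
  rw [Finset.sum_congr rfl h1, ← Finset.sum_mul, ← hQ a]
  simp [Real.negMulLog]

lemma core {S U V W : Type*} [Fintype S] [Fintype U] [Fintype V] [Fintype W]
    [DecidableEq S] [DecidableEq U] [DecidableEq V] [DecidableEq W]
    (q : S → ℝ) (hq : ∀ s, 0 ≤ q s)
    (u : S → U) (v : S → V) (w : S → W) (pu : U → W) (pv : V → W)
    (hwu : ∀ s, w s = pu (u s)) (hwv : ∀ s, w s = pv (v s))
    (hinj : ∀ s t, q s ≠ 0 → q t ≠ 0 → u s = u t → v s = v t → s = t)
    (Qu : U → ℝ) (hQu : ∀ a, Qu a = ∑ s ∈ Finset.univ.filter fun s => u s = a, q s)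
    (Qv : V → ℝ) (hQv : ∀ b, Qv b = ∑ s ∈ Finset.univ.filter fun s => v s = b, q s)
    (Qw : W → ℝ) (hQw : ∀ c, Qw c = ∑ s ∈ Finset.univ.filter fun s => w s = c, q s) :
    (∑ s : S, Real.negMulLog (q s)) + ∑ c : W, Real.negMulLog (Qw c)
    ≤ (∑ a : U, Real.negMulLog (Qu a)) + ∑ b : V, Real.negMulLog (Qv b) := by
  classical
  have hQu0 : ∀ a, 0 ≤ Qu a := fun a => (hQu a) ▸ Finset.sum_nonneg fun s _ => hq s
  have hQv0 : ∀ b, 0 ≤ Qv b := fun b => (hQv b) ▸ Finset.sum_nonneg fun s _ => hq s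
  have hQw0 : ∀ c, 0 ≤ Qw c := fun c => (hQw c) ▸ Finset.sum_nonneg fun s _ => hq s
  have hleU : ∀ s, q s ≤ Qu (u s) := fun s => (hQu (u s)) ▸
    Finset.single_le_sum (fun t _ => hq t) (by simp)
  have hleV : ∀ s, q s ≤ Qv (v s) := fun s => (hQv (v s)) ▸
    Finset.single_le_sum (fun t _ => hq t) (by simp)
  have hleW : ∀ s, q s ≤ Qw (w s) := fun s => (hQw (w s)) ▸
    Finset.single_le_sum (fun t _ => hq t) (by simp)
  rw [sum_negMulLog_fiber q u Qu hQu, sum_negMulLog_fiber q v Qv hQv,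
      sum_negMulLog_fiber q w Qw hQw]
  rw [← sub_nonneg]
  have hsplit : (∑ s : S, q s * (-(Real.log (Qu (u s)))))
      + (∑ s : S, q s * (-(Real.log (Qv (v s)))))
      - ((∑ s : S, Real.negMulLog (q s)) + ∑ s : S, q s * (-(Real.log (Qw (w s)))))
      = ∑ s : S, (q s * (-(Real.log (Qu (u s)))) + q s * (-(Real.log (Qv (v s))))
          - Real.negMulLog (q s) - q s * (-(Real.log (Qw (w s))))) := by
    simp only [Finset.sum_sub_distrib, Finset.sum_add_distrib]
    ring
  rw [hsplit]
  -- restrict to support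
  set T : Finset S := Finset.univ.filter fun s => q s ≠ 0 with hT
  have hrestrict : ∑ s : S, (q s * (-(Real.log (Qu (u s)))) + q s * (-(Real.log (Qv (v s))))
          - Real.negMulLog (q s) - q s * (-(Real.log (Qw (w s)))))
      = ∑ s ∈ T, (q s * (-(Real.log (Qu (u s)))) + q s * (-(Real.log (Qv (v s))))
          - Real.negMulLog (q s) - q s * (-(Real.log (Qw (w s))))) := by
    refine (Finset.sum_subset (Finset.subset_univ T) ?_).symm
    intro s _ hs
    have : q s = 0 := by simpa [hT] using hs
    simp [this]
  rw [hrestrict]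
  -- pointwise bound on support
  have hpoint : ∀ s ∈ T,
      q s - Qu (u s) * Qv (v s) / Qw (w s)
      ≤ q s * (-(Real.log (Qu (u s)))) + q s * (-(Real.log (Qv (v s))))
          - Real.negMulLog (q s) - q s * (-(Real.log (Qw (w s)))) := by
    intro s hs
    have hx : 0 < q s := lt_of_le_of_ne (hq s) (Ne.symm (by simpa [hT] using hs))
    have ha : 0 < Qu (u s) := lt_of_lt_of_le hx (hleU s)
    have hb : 0 < Qv (v s) := lt_of_lt_of_le hx (hleV s)
    have hc : 0 < Qw (w s) := lt_of_lt_of_le hx (hleW s)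
    have hlog : Real.log (Qu (u s) * Qv (v s) / (q s * Qw (w s)))
        ≤ Qu (u s) * Qv (v s) / (q s * Qw (w s)) - 1 :=
      Real.log_le_sub_one_of_pos (by positivity)
    rw [Real.log_div (by positivity) (by positivity), Real.log_mul ha.ne' hb.ne',
        Real.log_mul hx.ne' hc.ne'] at hlog
    have h2 : q s * (Real.log (Qu (u s)) + Real.log (Qv (v s))
          - (Real.log (q s) + Real.log (Qw (w s))))
        ≤ q s * (Qu (u s) * Qv (v s) / (q s * Qw (w s)) - 1) :=
      mul_le_mul_of_nonneg_left hlog hx.le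
    have h3 : q s * (Qu (u s) * Qv (v s) / (q s * Qw (w s)) - 1)
        = Qu (u s) * Qv (v s) / Qw (w s) - q s := by
      field_simp
    rw [h3] at h2
    simp only [Real.negMulLog]
    nlinarith [h2]
  refine le_trans ?_ (Finset.sum_le_sum hpoint)
  rw [Finset.sum_sub_distrib, sub_nonneg]
  -- the counting bound
  have hq_sum : ∑ s ∈ T, q s = ∑ c : W, Qw c := by
    have h1 : ∑ s ∈ T, q s = ∑ s : S, q s := by
      refine Finset.sum_subset (Finset.subset_univ T) ?_
      intro s _ hs
      simpa [hT] using hs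
    rw [h1, ← Finset.sum_fiberwise (Finset.univ) w q]
    exact Finset.sum_congr rfl fun c _ => (hQw c).symm
  rw [hq_sum]
  -- sum of F over the support via the image
  set F : U × V → ℝ := fun ab => Qu ab.1 * Qv ab.2 / Qw (pu ab.1) with hF
  have hFnonneg : ∀ ab, 0 ≤ F ab := fun ab => by
    have := hQu0 ab.1; have := hQv0 ab.2; have := hQw0 (pu ab.1); positivity
  have himg : ∑ s ∈ T, Qu (u s) * Qv (v s) / Qw (w s)
      = ∑ ab ∈ T.image (fun s => (u s, v s)), F ab := by
    rw [Finset.sum_image (by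
      intro x hx y hy hxy
      simp only [Prod.mk.injEq] at hxy
      exact hinj x y (by simpa [hT] using hx) (by simpa [hT] using hy) hxy.1 hxy.2)]
    refine Finset.sum_congr rfl fun s _ => ?_
    simp only [hF]
    rw [← hwu s]
  rw [himg]
  set E : Finset (U × V) := Finset.univ.filter fun ab => pu ab.1 = pv ab.2 with hE
  have hsub : T.image (fun s => (u s, v s)) ⊆ E := by
    intro ab hab
    obtain ⟨s, _, rfl⟩ := Finset.mem_image.mp hab
    simp only [hE, Finset.mem_filter, Finset.mem_univ, true_and]
    rw [← hwu s, ← hwv s]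
  refine le_trans (Finset.sum_le_sum_of_subset_of_nonneg hsub fun ab _ _ => hFnonneg ab) ?_
  -- group E by the common value c
  have hgroup : ∑ ab ∈ E, F ab
      = ∑ c : W, ∑ ab ∈ E.filter fun ab => pu ab.1 = c, F ab := by
    exact (Finset.sum_fiberwise_of_maps_to (fun ab _ => Finset.mem_univ _) F).symm
  rw [hgroup]
  refine Finset.sum_le_sum fun c _ => ?_
  have hprod : E.filter (fun ab => pu ab.1 = c)
      = (Finset.univ.filter fun a => pu a = c) ×ˢ (Finset.univ.filter fun b => pv b = c) := by
    ext ⟨a, b⟩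
    simp only [hE, Finset.mem_filter, Finset.filter_filter, Finset.mem_univ, true_and,
      Finset.mem_product]
    constructor
    · rintro ⟨h1, h2⟩; exact ⟨h2, h1 ▸ h2⟩
    · rintro ⟨h1, h2⟩; exact ⟨h1.trans h2.symm, h1⟩
  rw [hprod]
  have hconst : ∑ ab ∈ (Finset.univ.filter fun a => pu a = c) ×ˢ
        (Finset.univ.filter fun b => pv b = c), F ab
      = (∑ a ∈ Finset.univ.filter fun a => pu a = c, Qu a)
        * (∑ b ∈ Finset.univ.filter fun b => pv b = c, Qv b) / Qw c := by
    rw [Finset.sum_product, Finset.sum_mul_sum, Finset.sum_div]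
    refine Finset.sum_congr rfl fun a ha => ?_
    have hac : pu a = c := by simpa using ha
    rw [Finset.sum_div]
    refine Finset.sum_congr rfl fun b _ => ?_
    simp only [hF, hac]
  rw [hconst]
  have hUc : ∑ a ∈ Finset.univ.filter fun a => pu a = c, Qu a = Qw c := by
    rw [Finset.sum_congr rfl fun a _ => hQu a, fiber_sum q u (fun a => pu a = c), hQw c]
    refine Finset.sum_congr ?_ fun _ _ => rfl
    ext s; simp [hwu s]
  have hVc : ∑ b ∈ Finset.univ.filter fun b => pv b = c, Qv b = Qw c := by
    rw [Finset.sum_congr rfl fun b _ => hQv b, fiber_sum q v (fun b => pv b = c), hQw c]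
    refine Finset.sum_congr ?_ fun _ _ => rfl
    ext s; simp [hwv s]
  rw [hUc, hVc]
  rcases eq_or_ne (Qw c) 0 with h | h
  · simp [h]
  · rw [mul_div_assoc, div_self h, mul_one]

/-- `ent` of a composed map as a sum over fibers. -/
lemma ent_comp {Ω S U : Type*} [Fintype Ω] [Fintype S] [Fintype U]
    [DecidableEq S] [DecidableEq U]
    (p : Ω → ℝ) (f : Ω → S) (g : S → U) :
    ent p (fun ω => g (f ω))
      = ∑ a : U, Real.negMulLog (∑ s ∈ Finset.univ.filter fun s => g s = a,
          (∑ ω ∈ Finset.univ.filter fun ω => f ω = s, p ω)) := by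
  unfold ent
  refine Finset.sum_congr rfl fun a _ => ?_
  rw [fiber_sum p f (fun s => g s = a)]

lemma jent_submodular {N : ℕ} {Ω α : Type*} [Fintype Ω] [Fintype α] [DecidableEq α]
    (p : Ω → ℝ) (hp0 : ∀ ω, 0 ≤ p ω) (X : Fin N → Ω → α) (A B : Finset (Fin N)) :
    jent p X (A ∩ B) + jent p X (A ∪ B) ≤ jent p X A + jent p X B := by
  classical
  set S := Fin N → Option α with hS
  set F : Ω → S := fun ω i => if i ∈ A ∪ B then some (X i ω) else none with hF
  set r : Finset (Fin N) → S → S := fun C s i => if i ∈ C then s i else none with hr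
  set q : S → ℝ := fun s => ∑ ω ∈ Finset.univ.filter fun ω => F ω = s, p ω with hq
  -- jent of a subset C ⊆ A ∪ B is ent of r C ∘ F
  have hjent : ∀ C : Finset (Fin N), C ⊆ A ∪ B →
      jent p X C = ent p (fun ω => r C (F ω)) := by
    intro C hC
    unfold jent
    congr 1
    funext ω
    funext i
    simp only [hr, hF]
    by_cases hi : i ∈ C
    · simp [hi, hC hi]
    · simp [hi]
  have hrAB : ∀ s, r (A ∩ B) (r A s) = r (A ∩ B) s := by
    intro s; funext i
    simp only [hr]
    by_cases hi : i ∈ A ∩ B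
    · simp [hi, (Finset.mem_inter.mp hi).1]
    · simp [hi]
  have hrBB : ∀ s, r (A ∩ B) (r B s) = r (A ∩ B) s := by
    intro s; funext i
    simp only [hr]
    by_cases hi : i ∈ A ∩ B
    · simp [hi, (Finset.mem_inter.mp hi).2]
    · simp [hi]
  have hinj : ∀ s t, q s ≠ 0 → q t ≠ 0 → r A s = r A t → r B s = r B t → s = t := by
    intro s t hs ht hA hB
    obtain ⟨ωs, hωs⟩ := Finset.nonempty_of_sum_ne_zero hs
    obtain ⟨ωt, hωt⟩ := Finset.nonempty_of_sum_ne_zero ht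
    simp only [Finset.mem_filter, Finset.mem_univ, true_and] at hωs hωt
    funext i
    by_cases hiA : i ∈ A
    · have := congrFun hA i
      simpa [hr, hiA] using this
    · by_cases hiB : i ∈ B
      · have := congrFun hB i
        simpa [hr, hiB] using this
      · have h1 : s i = none := by
          rw [← hωs]; simp [hF, Finset.mem_union, hiA, hiB]
        have h2 : t i = none := by
          rw [← hωt]; simp [hF, Finset.mem_union, hiA, hiB]
        rw [h1, h2]
  have hq0 : ∀ s, 0 ≤ q s := fun s => Finset.sum_nonneg fun ω _ => hp0 ω
  have hmain := core q hq0 (r A) (r B) (r (A ∩ B)) (r (A ∩ B)) (r (A ∩ B))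
    (fun s => (hrAB s).symm) (fun s => (hrBB s).symm) hinj
    (fun a => ∑ s ∈ Finset.univ.filter fun s => r A s = a, q s) (fun _ => rfl)
    (fun b => ∑ s ∈ Finset.univ.filter fun s => r B s = b, q s) (fun _ => rfl)
    (fun c => ∑ s ∈ Finset.univ.filter fun s => r (A ∩ B) s = c, q s) (fun _ => rfl)
  have e1 : jent p X A = ∑ a : S, Real.negMulLog
      (∑ s ∈ Finset.univ.filter fun s => r A s = a, q s) := by
    rw [hjent A Finset.subset_union_left, ent_comp p F (r A)]
  have e2 : jent p X B = ∑ b : S, Real.negMulLog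
      (∑ s ∈ Finset.univ.filter fun s => r B s = b, q s) := by
    rw [hjent B Finset.subset_union_right, ent_comp p F (r B)]
  have e3 : jent p X (A ∩ B) = ∑ c : S, Real.negMulLog
      (∑ s ∈ Finset.univ.filter fun s => r (A ∩ B) s = c, q s) := by
    rw [hjent (A ∩ B) (Finset.inter_subset_union), ent_comp p F (r (A ∩ B))]
  have e4 : jent p X (A ∪ B) = ∑ s : S, Real.negMulLog (q s) := by
    unfold jent ent
    rfl
  rw [e1, e2, e3, e4]
  linarith [hmain]

/-- if `Λ` is a compression of `Γ` (a finite sequence of elementary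
compressions), then `Σ_{Γ'∈Γ} H(X_{Γ'}) ≥ Σ_{Λ'∈Λ} H(X_{Λ'})`. -/
theorem stmt7 {N : ℕ} {Ω α : Type*} [Fintype Ω] [Fintype α] [DecidableEq α]
    (p : Ω → ℝ) (hp0 : ∀ ω, 0 ≤ p ω) (hp1 : ∑ ω, p ω = 1)
    (X : Fin N → Ω → α)
    (Γ Λ : Multiset (Finset (Fin N)))
    (h : Relation.ReflTransGen ElemComp Γ Λ) :
    (Λ.map (jent p X)).sum ≤ (Γ.map (jent p X)).sum := by
  induction h with
  | refl => exact le_rfl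
  | tail _ hstep ih =>
    refine le_trans ?_ ih
    obtain ⟨Γ₀, A, B, rfl, rfl⟩ := hstep
    simp only [Multiset.map_cons, Multiset.sum_cons]
    have := jent_submodular p hp0 X A B
    linarith
end

section
/- Associate to a multiset Γ of sets the graph G_Γ whose vertices are the member sets and where two vertices are adjacent iff neither set is contained in the other. If Λ is obtained from Γ by a non-trivial elementary compression (replacing incomparable A, B by A∩B and A∪B), then G_Λ has strictly fewer edges than G_Γ. -/
/-- Number of edges of the graph associated with the indexed multiset `V`: vertices are the
members `V k` and two members are adjacent iff neither is contained in the other. -/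
def edgeCount {n : ℕ} {γ : Type*} [DecidableEq γ] (V : Fin n → Finset γ) : ℕ :=
  (Finset.univ.filter fun p : Fin n × Fin n =>
    p.1 < p.2 ∧ ¬ V p.1 ⊆ V p.2 ∧ ¬ V p.2 ⊆ V p.1).card

/-- Selector: for a vertex `k ∈ {i, j}` of the compressed graph and a third vertex `c`,
choose which of the original vertices `i`, `j` the edge maps to. -/
private def tsel {n : ℕ} {γ : Type*} [DecidableEq γ] (V : Fin n → Finset γ)
    (i j k c : Fin n) : Fin n :=
  if k = i then (if ¬ V i ⊆ V c ∧ ¬ V c ⊆ V i then i else j)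
  else (if ¬ V j ⊆ V c ∧ ¬ V c ⊆ V j then j else i)

/-- Sorted pair. -/
private def spair {n : ℕ} (a b : Fin n) : Fin n × Fin n :=
  if a < b then (a, b) else (b, a)

/-- The injection on edges. -/
private def fmap {n : ℕ} {γ : Type*} [DecidableEq γ] (V : Fin n → Finset γ)
    (i j : Fin n) (p : Fin n × Fin n) : Fin n × Fin n :=
  if p.1 = i ∨ p.1 = j then
    (if p.2 = i ∨ p.2 = j then p else spair (tsel V i j p.1 p.2) p.2)
  else if p.2 = i ∨ p.2 = j then spair (tsel V i j p.2 p.1) p.1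
  else p

private lemma tsel_mem {n : ℕ} {γ : Type*} [DecidableEq γ] (V : Fin n → Finset γ)
    (i j k c : Fin n) : tsel V i j k c = i ∨ tsel V i j k c = j := by
  unfold tsel; split_ifs <;> simp

private lemma spair_spec {n : ℕ} (a b : Fin n) (h : a ≠ b) :
    (a < b ∧ spair a b = (a, b)) ∨ (b < a ∧ spair a b = (b, a)) := by
  rcases h.lt_or_gt with h' | h'
  · exact Or.inl ⟨h', if_pos h'⟩
  · exact Or.inr ⟨h', if_neg (asymm h')⟩

private lemma key_i {n : ℕ} {γ : Type*} [DecidableEq γ] (V : Fin n → Finset γ)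
    (i j c : Fin n) (h1 : ¬ V i ∩ V j ⊆ V c) (h2 : ¬ V c ⊆ V i ∩ V j) :
    ¬ V (tsel V i j i c) ⊆ V c ∧ ¬ V c ⊆ V (tsel V i j i c) := by
  have e1 : tsel V i j i c = if ¬ V i ⊆ V c ∧ ¬ V c ⊆ V i then i else j := by
    simp [tsel]
  by_cases hAC : ¬ V i ⊆ V c ∧ ¬ V c ⊆ V i
  · rw [e1, if_pos hAC]; exact hAC
  · rw [e1, if_neg hAC]
    have hA : ¬ V i ⊆ V c := fun h => h1 (Finset.inter_subset_left.trans h)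
    rw [not_and_or, not_not, not_not] at hAC
    have hCA : V c ⊆ V i := hAC.resolve_left hA
    exact ⟨fun h => h1 (Finset.inter_subset_right.trans h),
      fun h => h2 (Finset.subset_inter hCA h)⟩

private lemma key_j {n : ℕ} {γ : Type*} [DecidableEq γ] (V : Fin n → Finset γ)
    (i j c : Fin n) (hji : j ≠ i)
    (h1 : ¬ V i ∪ V j ⊆ V c) (h2 : ¬ V c ⊆ V i ∪ V j) :
    ¬ V (tsel V i j j c) ⊆ V c ∧ ¬ V c ⊆ V (tsel V i j j c) := by
  have e1 : tsel V i j j c = if ¬ V j ⊆ V c ∧ ¬ V c ⊆ V j then j else i := by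
    simp [tsel, hji]
  by_cases hBC : ¬ V j ⊆ V c ∧ ¬ V c ⊆ V j
  · rw [e1, if_pos hBC]; exact hBC
  · rw [e1, if_neg hBC]
    have hC : ¬ V c ⊆ V j := fun h => h2 (h.trans Finset.subset_union_right)
    rw [not_and_or, not_not, not_not] at hBC
    have hB : V j ⊆ V c := hBC.resolve_right hC
    exact ⟨fun h => h1 (Finset.union_subset h hB),
      fun h => h2 (h.trans Finset.subset_union_left)⟩

private lemma key_ne {n : ℕ} {γ : Type*} [DecidableEq γ] (V : Fin n → Finset γ)
    (i j c : Fin n) (hij : i ≠ j)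
    (h1 : ¬ V i ∩ V j ⊆ V c) (h2 : ¬ V c ⊆ V i ∩ V j)
    (h3 : ¬ V i ∪ V j ⊆ V c) (h4 : ¬ V c ⊆ V i ∪ V j) :
    tsel V i j i c ≠ tsel V i j j c := by
  have e1 : tsel V i j i c = if ¬ V i ⊆ V c ∧ ¬ V c ⊆ V i then i else j := by
    simp [tsel]
  have e2 : tsel V i j j c = if ¬ V j ⊆ V c ∧ ¬ V c ⊆ V j then j else i := by
    simp [tsel, hij.symm]
  by_cases hAC : ¬ V i ⊆ V c ∧ ¬ V c ⊆ V i
  · have hB : ¬ V j ⊆ V c := fun h => h1 (Finset.inter_subset_right.trans h)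
    have hC : ¬ V c ⊆ V j := fun h => h4 (h.trans Finset.subset_union_right)
    rw [e1, e2, if_pos hAC, if_pos ⟨hB, hC⟩]; exact hij
  · have hA : ¬ V i ⊆ V c := fun h => h1 (Finset.inter_subset_left.trans h)
    rw [not_and_or, not_not, not_not] at hAC
    have hCA : V c ⊆ V i := hAC.resolve_left hA
    exact absurd (hCA.trans Finset.subset_union_left) h4

/-- a non-trivial elementary compression (replacing incomparable members
`V i`, `V j` by their intersection and union) strictly decreases the number of edges of the
associated graph. -/
theorem stmt12 {n : ℕ} {γ : Type*} [DecidableEq γ] (V : Fin n → Finset γ)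
    (i j : Fin n) (hij : i ≠ j)
    (h1 : ¬ V i ⊆ V j) (h2 : ¬ V j ⊆ V i) :
    edgeCount (Function.update (Function.update V i (V i ∩ V j)) j (V i ∪ V j))
      < edgeCount V := by
  set W := Function.update (Function.update V i (V i ∩ V j)) j (V i ∪ V j) with hWdef
  have hWj : W j = V i ∪ V j := Function.update_self _ _ _
  have hWi : W i = V i ∩ V j := by
    rw [hWdef, Function.update_of_ne hij, Function.update_self]
  have hWc : ∀ c : Fin n, c ≠ i → c ≠ j → W c = V c := fun c hci hcj => by
    rw [hWdef, Function.update_of_ne hcj, Function.update_of_ne hci]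
  unfold edgeCount
  set SW := Finset.univ.filter (fun p : Fin n × Fin n =>
      p.1 < p.2 ∧ ¬ W p.1 ⊆ W p.2 ∧ ¬ W p.2 ⊆ W p.1) with hSW
  set SV := Finset.univ.filter (fun p : Fin n × Fin n =>
      p.1 < p.2 ∧ ¬ V p.1 ⊆ V p.2 ∧ ¬ V p.2 ⊆ V p.1) with hSV
  have hq0 : spair i j ∈ SV := by
    rcases spair_spec i j hij with ⟨h, hs⟩ | ⟨h, hs⟩ <;> rw [hs, hSV]
    · exact Finset.mem_filter.mpr ⟨Finset.mem_univ _, h, h1, h2⟩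
    · exact Finset.mem_filter.mpr ⟨Finset.mem_univ _, h, h2, h1⟩
  have hchar : ∀ p : Fin n × Fin n, p ∈ SW →
      ((p.1 ≠ i ∧ p.1 ≠ j ∧ p.2 ≠ i ∧ p.2 ≠ j) ∧ fmap V i j p = p) ∨
      (∃ k c : Fin n, (k = i ∨ k = j) ∧ c ≠ i ∧ c ≠ j ∧ (p = (k, c) ∨ p = (c, k)) ∧
        fmap V i j p = spair (tsel V i j k c) c ∧ ¬ W k ⊆ V c ∧ ¬ V c ⊆ W k) := by
    intro p hp
    obtain ⟨-, hlt, hab, hba⟩ := Finset.mem_filter.mp hp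
    by_cases h1p : p.1 = i ∨ p.1 = j
    · by_cases h2p : p.2 = i ∨ p.2 = j
      · exfalso
        have hne : p.1 ≠ p.2 := ne_of_lt hlt
        rcases h1p with h | h <;> rcases h2p with h' | h'
        · exact hne (h.trans h'.symm)
        · rw [h, h', hWi, hWj] at hab; exact hab Finset.inter_subset_union
        · rw [h, h', hWj, hWi] at hba; exact hba Finset.inter_subset_union
        · exact hne (h.trans h'.symm)
      · right
        push_neg at h2p
        refine ⟨p.1, p.2, h1p, h2p.1, h2p.2, Or.inl rfl, ?_, ?_, ?_⟩
        · unfold fmap; rw [if_pos h1p, if_neg (not_or.mpr ⟨h2p.1, h2p.2⟩)]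
        · rw [← hWc p.2 h2p.1 h2p.2]; exact hab
        · rw [← hWc p.2 h2p.1 h2p.2]; exact hba
    · by_cases h2p : p.2 = i ∨ p.2 = j
      · right
        push_neg at h1p
        refine ⟨p.2, p.1, h2p, h1p.1, h1p.2, Or.inr rfl, ?_, ?_, ?_⟩
        · unfold fmap; rw [if_neg (not_or.mpr ⟨h1p.1, h1p.2⟩), if_pos h2p]
        · rw [← hWc p.1 h1p.1 h1p.2]; exact hba
        · rw [← hWc p.1 h1p.1 h1p.2]; exact hab
      · left
        push_neg at h1p; push_neg at h2p
        refine ⟨⟨h1p.1, h1p.2, h2p.1, h2p.2⟩, ?_⟩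
        unfold fmap
        rw [if_neg (not_or.mpr ⟨h1p.1, h1p.2⟩), if_neg (not_or.mpr ⟨h2p.1, h2p.2⟩)]
  have hmaps : ∀ p ∈ SW, fmap V i j p ∈ SV.erase (spair i j) := by
    intro p hp
    obtain ⟨-, hlt, hab, hba⟩ := Finset.mem_filter.mp hp
    rw [Finset.mem_erase]
    rcases hchar p hp with ⟨⟨h1i, h1j, h2i, h2j⟩, hfp⟩ |
      ⟨k, c, hk, hci, hcj, hpe, hfp, hk1, hk2⟩
    · constructor
      · rw [hfp]; intro heq
        rcases spair_spec i j hij with ⟨-, hs⟩ | ⟨-, hs⟩ <;> rw [hs] at heq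
        · exact h1i (congrArg Prod.fst heq)
        · exact h1j (congrArg Prod.fst heq)
      · rw [hfp]
        refine Finset.mem_filter.mpr ⟨Finset.mem_univ _, hlt, ?_, ?_⟩
        · rw [← hWc p.1 h1i h1j, ← hWc p.2 h2i h2j]; exact hab
        · rw [← hWc p.1 h1i h1j, ← hWc p.2 h2i h2j]; exact hba
    · have hinc : ¬ V (tsel V i j k c) ⊆ V c ∧ ¬ V c ⊆ V (tsel V i j k c) := by
        rcases hk with rfl | rfl
        · rw [hWi] at hk1 hk2; exact key_i V k j c hk1 hk2
        · rw [hWj] at hk1 hk2; exact key_j V i k c hij.symm hk1 hk2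
      have htm := tsel_mem V i j k c
      have htc : tsel V i j k c ≠ c := by
        rcases htm with h | h <;> rw [h]
        · exact Ne.symm hci
        · exact Ne.symm hcj
      constructor
      · rw [hfp]; intro heq
        rcases spair_spec (tsel V i j k c) c htc with ⟨-, hs⟩ | ⟨-, hs⟩ <;>
          rcases spair_spec i j hij with ⟨-, hs'⟩ | ⟨-, hs'⟩ <;> rw [hs, hs'] at heq
        · exact hcj (congrArg Prod.snd heq)
        · exact hci (congrArg Prod.snd heq)
        · exact hci (congrArg Prod.fst heq)
        · exact hcj (congrArg Prod.fst heq)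
      · rw [hfp]
        rcases spair_spec (tsel V i j k c) c htc with ⟨hlt', hs⟩ | ⟨hlt', hs⟩ <;> rw [hs]
        · exact Finset.mem_filter.mpr ⟨Finset.mem_univ _, hlt', hinc.1, hinc.2⟩
        · exact Finset.mem_filter.mpr ⟨Finset.mem_univ _, hlt', hinc.2, hinc.1⟩
  have hinj : ∀ p ∈ SW, ∀ q ∈ SW, fmap V i j p = fmap V i j q → p = q := by
    intro p hp q hq heq
    obtain ⟨-, hltp, -, -⟩ := Finset.mem_filter.mp hp
    obtain ⟨-, hltq, -, -⟩ := Finset.mem_filter.mp hq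
    rcases hchar p hp with ⟨⟨hp1i, hp1j, hp2i, hp2j⟩, hfp⟩ |
        ⟨k, c, hk, hci, hcj, hpe, hfp, hk1, hk2⟩ <;>
      rcases hchar q hq with ⟨⟨hq1i, hq1j, hq2i, hq2j⟩, hfq⟩ |
        ⟨k', c', hk', hci', hcj', hqe, hfq, hk1', hk2'⟩
    · rw [hfp, hfq] at heq; exact heq
    · exfalso
      rw [hfp, hfq] at heq
      have htm := tsel_mem V i j k' c'
      have htc : tsel V i j k' c' ≠ c' := by
        rcases htm with h | h <;> rw [h]
        · exact Ne.symm hci'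
        · exact Ne.symm hcj'
      rcases spair_spec _ c' htc with ⟨-, hs⟩ | ⟨-, hs⟩ <;> rw [hs] at heq
      · have h' : p.1 = tsel V i j k' c' := congrArg Prod.fst heq
        rcases htm with h | h <;> rw [h] at h'
        · exact hp1i h'
        · exact hp1j h'
      · have h' : p.2 = tsel V i j k' c' := congrArg Prod.snd heq
        rcases htm with h | h <;> rw [h] at h'
        · exact hp2i h'
        · exact hp2j h'
    · exfalso
      rw [hfp, hfq] at heq
      have htm := tsel_mem V i j k c
      have htc : tsel V i j k c ≠ c := by
        rcases htm with h | h <;> rw [h]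
        · exact Ne.symm hci
        · exact Ne.symm hcj
      rcases spair_spec _ c htc with ⟨-, hs⟩ | ⟨-, hs⟩ <;> rw [hs] at heq
      · have h' : q.1 = tsel V i j k c := (congrArg Prod.fst heq).symm
        rcases htm with h | h <;> rw [h] at h'
        · exact hq1i h'
        · exact hq1j h'
      · have h' : q.2 = tsel V i j k c := (congrArg Prod.snd heq).symm
        rcases htm with h | h <;> rw [h] at h'
        · exact hq2i h'
        · exact hq2j h'
    · rw [hfp, hfq] at heq
      have htmp := tsel_mem V i j k c
      have htcp : tsel V i j k c ≠ c := by
        rcases htmp with h | h <;> rw [h]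
        · exact Ne.symm hci
        · exact Ne.symm hcj
      have htmq := tsel_mem V i j k' c'
      have htcq : tsel V i j k' c' ≠ c' := by
        rcases htmq with h | h <;> rw [h]
        · exact Ne.symm hci'
        · exact Ne.symm hcj'
      have hcc : c = c' ∧ tsel V i j k c = tsel V i j k' c' := by
        rcases spair_spec _ c htcp with ⟨-, hs⟩ | ⟨-, hs⟩ <;>
          rcases spair_spec _ c' htcq with ⟨-, hs'⟩ | ⟨-, hs'⟩ <;> rw [hs, hs'] at heq
        · exact ⟨congrArg Prod.snd heq, congrArg Prod.fst heq⟩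
        · exfalso
          have h' : c = tsel V i j k' c' := congrArg Prod.snd heq
          rcases htmq with h | h <;> rw [h] at h'
          · exact hci h'
          · exact hcj h'
        · exfalso
          have h' : c = tsel V i j k' c' := congrArg Prod.fst heq
          rcases htmq with h | h <;> rw [h] at h'
          · exact hci h'
          · exact hcj h'
        · exact ⟨congrArg Prod.fst heq, congrArg Prod.snd heq⟩
      obtain ⟨hcc', htt⟩ := hcc
      subst hcc'
      have hkk : k = k' := by
        rcases hk with rfl | rfl <;> rcases hk' with rfl | rfl
        · rfl
        · exfalso
          rw [hWi] at hk1 hk2; rw [hWj] at hk1' hk2'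
          exact key_ne V k k' c hij hk1 hk2 hk1' hk2' htt
        · exfalso
          rw [hWj] at hk1 hk2; rw [hWi] at hk1' hk2'
          exact key_ne V k' k c hij hk1' hk2' hk1 hk2 htt.symm
        · rfl
      subst hkk
      rcases hpe with hpe | hpe <;> rcases hqe with hqe | hqe
      · rw [hpe, hqe]
      · exfalso
        rw [hpe] at hltp; rw [hqe] at hltq
        exact lt_asymm hltp hltq
      · exfalso
        rw [hpe] at hltp; rw [hqe] at hltq
        exact lt_asymm hltp hltq
      · rw [hpe, hqe]
  calc SW.card ≤ (SV.erase (spair i j)).card :=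
        Finset.card_le_card_of_injOn (fmap V i j) hmaps
          (fun p hp q hq h => hinj p hp q hq h)
    _ < SV.card := Finset.card_erase_lt_of_mem hq0
end

section
/- For the combination network with two public receivers (I₁ = {1,2}) and private receivers I₂, the projection of the polytope {(R₁,R₂,(α_S)_{S⊆{1,2}}) : α_S ≥ 0; R₂ = Σ_S α_S; R₁ + Σ_{S∋i} α_S ≤ Σ_{S∋i}|E_S| for i=1,2; R₂ ≤ Σ_{S∈Λ} α_S + Σ_{S∈Λᶜ}|E_{S,p}| for all superset-saturated Λ and all p; R₁+R₂ ≤ Σ_S |E_{S,p}| for all p} onto (R₁,R₂) equals {(R₁,R₂) ≥ 0 : R₁ ≤ min(|E_{{1}}|+|E_{{1,2}}|, |E_{{2}}|+|E_{{1,2}}|); R₁+R₂ ≤ min_p Σ_{S⊆{1,2}} |E_{S,p}|; 2R₁+R₂ ≤ min_p (|E_{{1}}| + 2|E_{{1,2}}| + |E_{{2}}| + |E_{φ,p}|)}. -/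
private lemma univ4 : (Finset.univ : Finset (Finset (Fin 2))) = {∅, {0}, {1}, {0,1}} := by decide

private lemma sum4 (f : Finset (Fin 2) → ℝ) :
    ∑ S : Finset (Fin 2), f S = f ∅ + f {0} + f {1} + f {0,1} := by
  rw [univ4, Finset.sum_insert (by decide), Finset.sum_insert (by decide),
    Finset.sum_insert (by decide), Finset.sum_singleton]
  ring

private lemma filt0 :
    (Finset.univ.filter (fun S : Finset (Fin 2) => (0:Fin 2) ∈ S)) = {{0},{0,1}} := by decide

private lemma filt1 :
    (Finset.univ.filter (fun S : Finset (Fin 2) => (1:Fin 2) ∈ S)) = {{1},{0,1}} := by decide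

private lemma sat_cases : ∀ Λ : Finset (Finset (Fin 2)),
    (∀ S ∈ Λ, ∀ T : Finset (Fin 2), S ⊆ T → T ∈ Λ) →
    (Λ = ∅ ∨ Λ = {{0,1}} ∨ Λ = {{0},{0,1}} ∨ Λ = {{1},{0,1}} ∨ Λ = {{0},{1},{0,1}}
      ∨ Λ = {∅,{0},{1},{0,1}}) := by decide

private lemma comp_empty : (∅ : Finset (Finset (Fin 2)))ᶜ = {∅,{0},{1},{0,1}} := by decide
private lemma comp_top : ({{0,1}} : Finset (Finset (Fin 2)))ᶜ = {∅,{0},{1}} := by decide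
private lemma comp_0 : ({{0},{0,1}} : Finset (Finset (Fin 2)))ᶜ = {∅,{1}} := by decide
private lemma comp_1 : ({{1},{0,1}} : Finset (Finset (Fin 2)))ᶜ = {∅,{0}} := by decide
private lemma comp_01 : ({{0},{1},{0,1}} : Finset (Finset (Fin 2)))ᶜ = {∅} := by decide
private lemma comp_all : ({∅,{0},{1},{0,1}} : Finset (Finset (Fin 2)))ᶜ = ∅ := by decide

/-- A superset-saturated family of subsets of `{1,2}`. -/
def Saturated (Λ : Finset (Finset (Fin 2))) : Prop :=
  ∀ S ∈ Λ, ∀ T : Finset (Fin 2), S ⊆ T → T ∈ Λ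

/-- for two public receivers, the projection onto `(R₁,R₂)` of the
rate-splitting polytope equals the explicit region with the cut bounds on `R₁`,
`R₁ + R₂`, and `2R₁ + R₂`. Here `E S` is the number of resources seen exactly by the
public receivers in `S`, and `Ep S p` those among them also reaching private receiver `p`. -/
theorem stmt15 {P : Type*} [Fintype P]
    (E : Finset (Fin 2) → ℝ) (Ep : Finset (Fin 2) → P → ℝ)
    (hE : ∀ S, 0 ≤ E S) (hEp : ∀ S p, 0 ≤ Ep S p) (hEpE : ∀ S p, Ep S p ≤ E S) :
    {x : ℝ × ℝ | 0 ≤ x.1 ∧ 0 ≤ x.2 ∧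
        ∃ α : Finset (Fin 2) → ℝ,
          (∀ S, 0 ≤ α S) ∧
          x.2 = ∑ S : Finset (Fin 2), α S ∧
          (∀ i : Fin 2,
            x.1 + ∑ S ∈ Finset.univ.filter (fun S : Finset (Fin 2) => i ∈ S), α S
              ≤ ∑ S ∈ Finset.univ.filter (fun S : Finset (Fin 2) => i ∈ S), E S) ∧
          (∀ p : P, ∀ Λ : Finset (Finset (Fin 2)), Saturated Λ →
            x.2 ≤ ∑ S ∈ Λ, α S + ∑ S ∈ Λᶜ, Ep S p) ∧
          (∀ p : P, x.1 + x.2 ≤ ∑ S : Finset (Fin 2), Ep S p)} =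
    {x : ℝ × ℝ | 0 ≤ x.1 ∧ 0 ≤ x.2 ∧
        x.1 ≤ E {0} + E {0, 1} ∧ x.1 ≤ E {1} + E {0, 1} ∧
        (∀ p : P, x.1 + x.2 ≤ ∑ S : Finset (Fin 2), Ep S p) ∧
        (∀ p : P, 2 * x.1 + x.2 ≤ E {0} + 2 * E {0, 1} + E {1} + Ep ∅ p)} := by
  ext ⟨R₁, R₂⟩
  simp only [Set.mem_setOf_eq]
  constructor
  · rintro ⟨h₁, h₂, α, hα, hsum, hi, hΛ, hp⟩
    have hi0 := hi 0
    have hi1 := hi 1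
    rw [filt0, Finset.sum_pair (by decide), Finset.sum_pair (by decide)] at hi0
    rw [filt1, Finset.sum_pair (by decide), Finset.sum_pair (by decide)] at hi1
    refine ⟨h₁, h₂, by linarith [hα {0}, hα {0,1}], by linarith [hα {1}, hα {0,1}], hp, ?_⟩
    intro p
    have hs := hΛ p {{0},{1},{0,1}} (by intro S hS T hST; revert hS; revert hST; revert T S; decide)
    rw [comp_01, Finset.sum_singleton, Finset.sum_insert (by decide),
      Finset.sum_pair (by decide)] at hs
    linarith [hα {0,1}]
  · rintro ⟨h₁, h₂, hA, hB, hsum, h2R⟩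
    set A : ℝ := E {0} + E {0,1} - R₁ with hAdef
    set B : ℝ := E {1} + E {0,1} - R₁ with hBdef
    set K : ℝ := max 0 (E {0,1} - R₁) with hKdef
    set u : ℝ := min A R₂ with hudef
    set v : ℝ := min B R₂ with hvdef
    set t : ℝ := max (min K R₂) (u + v - R₂) with htdef
    have hA0 : (0:ℝ) ≤ A := by simp only [hAdef]; linarith
    have hB0 : (0:ℝ) ≤ B := by simp only [hBdef]; linarith
    have hKA : K ≤ A := max_le hA0 (by simp only [hAdef]; linarith [hE {0}])
    have hKB : K ≤ B := max_le hB0 (by simp only [hBdef]; linarith [hE {1}])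
    have hK0 : (0:ℝ) ≤ K := le_max_left _ _
    have hKe : E {0,1} - R₁ ≤ K := le_max_right _ _
    have huA : u ≤ A := min_le_left _ _
    have huR : u ≤ R₂ := min_le_right _ _
    have hvB : v ≤ B := min_le_left _ _
    have hvR : v ≤ R₂ := min_le_right _ _
    have ht0 : (0:ℝ) ≤ t := le_trans (le_min hK0 h₂) (le_max_left _ _)
    have htu : t ≤ u := max_le (le_trans (min_le_min hKA le_rfl) le_rfl) (by linarith)
    have htv : t ≤ v := max_le (le_trans (min_le_min hKB le_rfl) le_rfl) (by linarith)
    have hta : u + v - R₂ ≤ t := le_max_right _ _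
    -- per-p facts
    have fact1 : ∀ p, R₂ ≤ u + Ep ∅ p + Ep {1} p := by
      intro p
      have hs := hsum p; rw [sum4] at hs
      rcases min_choice A R₂ with h | h
      · rw [← hudef] at h; rw [h, hAdef]; linarith [hEpE {0} p, hEpE {0,1} p]
      · rw [← hudef] at h; rw [h]; linarith [hEp ∅ p, hEp {1} p]
    have fact2 : ∀ p, R₂ ≤ v + Ep ∅ p + Ep {0} p := by
      intro p
      have hs := hsum p; rw [sum4] at hs
      rcases min_choice B R₂ with h | h
      · rw [← hvdef] at h; rw [h, hBdef]; linarith [hEpE {1} p, hEpE {0,1} p]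
      · rw [← hvdef] at h; rw [h]; linarith [hEp ∅ p, hEp {0} p]
    have fact3 : ∀ p, R₂ ≤ t + Ep ∅ p + Ep {0} p + Ep {1} p := by
      intro p
      have hs := hsum p; rw [sum4] at hs
      rcases le_total K R₂ with h | h
      · have : K ≤ t := le_trans (le_of_eq (min_eq_left h).symm) (le_max_left _ _)
        linarith [hEpE {0,1} p]
      · have : R₂ ≤ t := le_trans (le_of_eq (min_eq_right h).symm) (le_max_left _ _)
        linarith [hEp ∅ p, hEp {0} p, hEp {1} p]
    have fact4 : ∀ p, R₂ - u - v + t ≤ Ep ∅ p := by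
      intro p
      have hs := hsum p; rw [sum4] at hs
      have h2 := h2R p
      have hmu : min K R₂ ≤ u := by rw [hudef]; exact min_le_min hKA le_rfl
      have hmv : min K R₂ ≤ v := by rw [hvdef]; exact min_le_min hKB le_rfl
      rcases max_choice (min K R₂) (u + v - R₂) with h | h
      · rw [← htdef] at h
        rcases le_total K R₂ with hKR | hKR
        · rw [min_eq_left hKR] at h
          rcases min_choice A R₂ with hu | hu <;> rw [← hudef] at hu
          · rcases min_choice B R₂ with hv | hv <;> rw [← hvdef] at hv
            · -- u = A, v = B, t = K
              rcases max_choice 0 (E {0,1} - R₁) with hk | hk <;> rw [← hKdef] at hk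
              · rw [h, hk, hu, hv, hAdef, hBdef]; linarith
              · rw [h, hk, hu, hv, hAdef, hBdef]
                linarith [hEpE {0} p, hEpE {1} p, hEpE {0,1} p]
            · -- v = R₂ : a = t - u ≤ 0 since t = K ≤ A = u
              rw [h, hv, hu]; rw [min_eq_left hKR] at hmu; rw [hu] at hmu
              linarith [hEp ∅ p]
          · -- u = R₂ : a = t - v ≤ 0 since t = K ≤ v
            rw [h, hu]; rw [min_eq_left hKR] at hmv
            linarith [hEp ∅ p]
        · -- R₂ ≤ K : then u = v = R₂, t = R₂, a = 0
          rw [min_eq_right hKR] at h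
          have hu' : u = R₂ := by rw [hudef]; exact min_eq_right (hKR.trans hKA)
          have hv' : v = R₂ := by rw [hvdef]; exact min_eq_right (hKR.trans hKB)
          rw [h, hu', hv']; linarith [hEp ∅ p]
      · rw [← htdef] at h; rw [h]; linarith [hEp ∅ p]
    obtain ⟨α, e0, e1, e2, e3⟩ :
        ∃ α : Finset (Fin 2) → ℝ, α ∅ = R₂ - u - v + t ∧ α {0} = u - t ∧ α {1} = v - t ∧
          α {0,1} = t := by
      refine ⟨fun S => if S = ∅ then R₂ - u - v + t else if S = {0} then u - t
        else if S = {1} then v - t else t, ?_, ?_, ?_, ?_⟩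
      · beta_reduce; rw [if_pos rfl]
      · beta_reduce; rw [if_neg (by decide), if_pos rfl]
      · beta_reduce; rw [if_neg (by decide), if_neg (by decide), if_pos rfl]
      · beta_reduce; rw [if_neg (by decide), if_neg (by decide), if_neg (by decide)]
    refine ⟨h₁, h₂, α, ?_, ?_, ?_, ?_, hsum⟩
    · intro S
      rcases eq_or_ne S ∅ with rfl | hS0
      · rw [e0]; linarith
      rcases eq_or_ne S {0} with rfl | hS1
      · rw [e1]; linarith
      rcases eq_or_ne S {1} with rfl | hS2
      · rw [e2]; linarith
      have : S = {0,1} := by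
        have : ∀ S : Finset (Fin 2), S ≠ ∅ → S ≠ {0} → S ≠ {1} → S = {0,1} := by decide
        exact this S hS0 hS1 hS2
      rw [this, e3]; linarith
    · rw [sum4, e0, e1, e2, e3]; ring
    · intro i
      fin_cases i <;> beta_reduce <;> simp only [Fin.mk_zero, Fin.mk_one]
      · rw [filt0, Finset.sum_pair (by decide), Finset.sum_pair (by decide), e1, e3]
        simp only [hAdef, hudef] at huA ⊢
        linarith
      · rw [filt1, Finset.sum_pair (by decide), Finset.sum_pair (by decide), e2, e3]
        simp only [hBdef, hvdef] at hvB ⊢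
        linarith
    · intro p Λ hsat
      rcases sat_cases Λ hsat with h | h | h | h | h | h <;> subst h
      · rw [Finset.sum_empty, comp_empty, Finset.sum_insert (by decide),
          Finset.sum_insert (by decide), Finset.sum_pair (by decide)]
        have hs := hsum p; rw [sum4] at hs
        linarith
      · rw [Finset.sum_singleton, comp_top, Finset.sum_insert (by decide),
          Finset.sum_pair (by decide), e3]
        linarith [fact3 p]
      · rw [Finset.sum_pair (by decide), comp_0, Finset.sum_pair (by decide), e1, e3]
        linarith [fact1 p]
      · rw [Finset.sum_pair (by decide), comp_1, Finset.sum_pair (by decide), e2, e3]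
        linarith [fact2 p]
      · rw [Finset.sum_insert (by decide), Finset.sum_pair (by decide), comp_01,
          Finset.sum_singleton, e1, e2, e3]
        linarith [fact4 p]
      · rw [Finset.sum_insert (by decide), Finset.sum_insert (by decide),
          Finset.sum_pair (by decide), comp_all, Finset.sum_empty, e0, e1, e2, e3]
        linarith
end
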